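/- For a deterministic unary two-way automaton, a right traversal of a tape of length N (from the left endmarker to the right endmarker without touching the right endmarker earlier) rebounds on the left endmarker at most 2|Q| times, and its duration is at most G·N for a constant G depending only on the automaton, provided N exceeds all amplitudes. -/

import Mathlib

/-- Tape symbols: left endmarker, the unary letter, right endmarker. -/
inductive TapeSym : Type
  | lmark | a | rmark

/-- A linear subset of ℕᵏ. -/
def IsLinearSet' {k : ℕ} (S : Set (Fin k → ℕ)) : Prop :=
  ∃ (m : ℕ) (a : Fin k → ℕ) (b : Fin m → Fin k → ℕ),
    S = {v | ∃ c : Fin m → ℕ, v = a + ∑ j, c j • b j}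

/-- A semilinear (equivalently, Presburger-definable) subset of ℕᵏ. -/
def IsSemilinearSet' {k : ℕ} (S : Set (Fin k → ℕ)) : Prop :=
  ∃ (m : ℕ) (f : Fin m → Set (Fin k → ℕ)),
    (∀ i, IsLinearSet' (f i)) ∧ S = ⋃ i, f i

/-- Eventually periodic subset of ℕ. -/
def EventuallyPeriodic (L : Set ℕ) : Prop :=
  ∃ n₀ p : ℕ, 1 ≤ p ∧ ∀ n, n₀ ≤ n → (n ∈ L ↔ n + p ∈ L)

/-- The unary language {aⁿ : n ∈ L} is regular. -/
def UnaryRegular (L : Set ℕ) : Prop :=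
  ∃ (σ : Type) (_ : Fintype σ) (dfa : DFA Unit σ),
    ∀ n : ℕ, List.replicate n () ∈ dfa.accepts ↔ n ∈ L

/-- The symbol scanned at position `p` on the tape `{0, …, N+1}`. -/
def symAt (N : ℕ) (p : ℤ) : TapeSym :=
  if p ≤ 0 then TapeSym.lmark else if (N : ℤ) + 1 ≤ p then TapeSym.rmark else TapeSym.a

/-- One step of a deterministic two-way unary automaton on the tape `{0, …, N+1}`. -/
def tstep {Q : Type} (δ : Q → TapeSym → Q × ℤ) (N : ℕ) (c : Q × ℤ) : Q × ℤ :=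
  ((δ c.1 (symAt N c.2)).1, c.2 + (δ c.1 (symAt N c.2)).2)

/-- The run after `t` steps from configuration `(s, p)` on the tape `{0, …, N+1}`. -/
def trun {Q : Type} (δ : Q → TapeSym → Q × ℤ) (N : ℕ) (s : Q) (p : ℤ) (t : ℕ) : Q × ℤ :=
  (tstep δ N)^[t] (s, p)

/-- One step of the free run (two-way infinite unary tape, no endmarkers). -/
def freeStep {Q : Type} (δa : Q → Q × ℤ) (c : Q × ℤ) : Q × ℤ :=
  ((δa c.1).1, c.2 + (δa c.1).2)

/-- The free run from state `s` (displacement measured from the start). -/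
def freeRun {Q : Type} (δa : Q → Q × ℤ) (s : Q) (t : ℕ) : Q × ℤ :=
  (freeStep δa)^[t] (s, 0)

/-- The amplitude of a state `s`: the width of the range of displacements along
the first loop of its free run (which is contained in the first `|Q| + 1` steps). -/
noncomputable def amplitude {Q : Type} [Fintype Q] (δa : Q → Q × ℤ) (s : Q) : ℤ :=
  ((Finset.range (Fintype.card Q + 1)).image fun i => (freeRun δa s i).2).max'
      (by simp [Finset.nonempty_range_iff]) -
  ((Finset.range (Fintype.card Q + 1)).image fun i => (freeRun δa s i).2).min'
      (by simp [Finset.nonempty_range_iff])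


private lemma trun_succ' {Q : Type} (δ : Q → TapeSym → Q × ℤ) (N : ℕ) (s : Q) (p : ℤ) (t : ℕ) :
    trun δ N s p (t+1) = tstep δ N (trun δ N s p t) :=
  Function.iterate_succ_apply' _ _ _

private lemma trun_add' {Q : Type} (δ : Q → TapeSym → Q × ℤ) (N : ℕ) (s : Q) (p : ℤ) (t k : ℕ) :
    trun δ N s p (t + k) = (tstep δ N)^[k] (trun δ N s p t) := by
  unfold trun; rw [Nat.add_comm, Function.iterate_add_apply]

private lemma no_repeat' {Q : Type} (δ : Q → TapeSym → Q × ℤ) {N : ℕ} {s : Q} {T t1 t2 : ℕ}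
    (hT : (trun δ N s 0 T).2 = (N:ℤ) + 1)
    (hpre : ∀ t, t < T → (trun δ N s 0 t).2 ≠ (N:ℤ) + 1)
    (h12 : t1 < t2) (h2T : t2 ≤ T)
    (heq : trun δ N s 0 t1 = trun δ N s 0 t2) : False := by
  set per := t2 - t1 with hperdef
  have hper0 : 0 < per := Nat.sub_pos_of_lt h12
  have hfix : (tstep δ N)^[per] (trun δ N s 0 t1) = trun δ N s 0 t1 := by
    rw [← trun_add', hperdef, Nat.add_sub_cancel' h12.le, ← heq]
  have hiter : ∀ n, (tstep δ N)^[per * n] (trun δ N s 0 t1) = trun δ N s 0 t1 := by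
    intro n
    rw [Function.iterate_mul]
    exact Function.iterate_fixed hfix n
  have hT1 : t1 ≤ T := le_trans (le_of_lt h12) h2T
  set r := (T - t1) % per with hrdef
  have key : trun δ N s 0 T = trun δ N s 0 (t1 + r) := by
    have e1 : T = t1 + (r + per * ((T - t1) / per)) := by
      have := Nat.mod_add_div (T - t1) per
      omega
    rw [e1, trun_add', Function.iterate_add_apply, hiter, ← trun_add']
  have hrlt : t1 + r < T := by
    have : r < per := Nat.mod_lt _ hper0
    omega
  exact hpre _ hrlt (by rw [← key]; exact hT)

/-- a right traversal rebounds on the left endmarker at most `2|Q|` times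
and lasts at most `G·N` steps, for a constant `G` depending only on the automaton. -/
theorem stmt9 {Q : Type} [Fintype Q] (δ : Q → TapeSym → Q × ℤ)
    (hδ : ∀ q x, (δ q x).2 = -1 ∨ (δ q x).2 = 0 ∨ (δ q x).2 = 1) :
    ∃ G : ℕ, ∀ N : ℕ, (∀ q : Q, amplitude (fun q => δ q TapeSym.a) q < (N : ℤ)) →
      ∀ (s s' : Q) (T : ℕ),
        trun δ N s 0 T = (s', (N : ℤ) + 1) →
        (∀ t, t < T → (trun δ N s 0 t).2 ≠ (N : ℤ) + 1) →
        {t : ℕ | 0 < t ∧ t < T ∧ (trun δ N s 0 t).2 = 0}.ncard ≤ 2 * Fintype.card Q ∧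
        T ≤ G * N := by
  classical
  set K := Fintype.card Q with hK
  refine ⟨K * (K + 2), ?_⟩
  intro N hamp s s' T hT hpre
  set c : ℕ → Q × ℤ := trun δ N s 0 with hc
  have hsucc : ∀ t, c (t+1) = tstep δ N (c t) := fun t => trun_succ' δ N s 0 t
  have hp0 : (c 0).2 = 0 := rfl
  have hT2 : (c T).2 = (N:ℤ) + 1 := by rw [hT]
  have hN : 1 ≤ N := by
    have h1 := hamp s
    have h2 : 0 ≤ amplitude (fun q => δ q TapeSym.a) s := by
      unfold amplitude
      have hmem : (freeRun (fun q => δ q TapeSym.a) s 0).2 ∈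
          ((Finset.range (Fintype.card Q + 1)).image
            fun i => (freeRun (fun q => δ q TapeSym.a) s i).2) :=
        Finset.mem_image_of_mem _ (Finset.mem_range.mpr (Nat.succ_pos _))
      have := Finset.min'_le _ _ hmem
      have := Finset.le_max' _ _ hmem
      omega
    omega
  have hsym_l : ∀ z : ℤ, z ≤ 0 → symAt N z = TapeSym.lmark := by
    intro z hz; simp [symAt, hz]
  have hstep_diff : ∀ t, (c (t+1)).2 = (c t).2 + (δ (c t).1 (symAt N (c t).2)).2 := by
    intro t; rw [hsucc]; rfl
  have habs : ∀ t, (c t).2 - 1 ≤ (c (t+1)).2 ∧ (c (t+1)).2 ≤ (c t).2 + 1 := by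
    intro t
    have h := hstep_diff t
    rcases hδ (c t).1 (symAt N (c t).2) with h' | h' | h' <;> rw [h'] at h <;> omega
  have hTpos : 0 < T := by
    rcases Nat.eq_zero_or_pos T with h | h
    · exfalso; rw [h] at hT2; rw [hp0] at hT2; omega
    · exact h
  constructor
  · -- rebound count
    have hsub : {t : ℕ | 0 < t ∧ t < T ∧ (c t).2 = 0} ⊆ {t : ℕ | t < T ∧ (c t).2 = 0} :=
      fun t ht => ⟨ht.2.1, ht.2.2⟩
    have hfin : {t : ℕ | t < T ∧ (c t).2 = 0}.Finite :=
      (Set.finite_Iio T).subset (fun t ht => ht.1)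
    have hinj : Set.InjOn (fun t => (c t).1) {t : ℕ | t < T ∧ (c t).2 = 0} := by
      intro t1 h1 t2 h2 hq
      by_contra hne
      have heq : c t1 = c t2 := Prod.ext hq (h1.2.trans h2.2.symm)
      rcases Nat.lt_or_ge t1 t2 with h | h
      · exact no_repeat' δ hT2 hpre h h2.1.le heq
      · exact no_repeat' δ hT2 hpre (lt_of_le_of_ne h (Ne.symm hne)) h1.1.le heq.symm
    calc {t : ℕ | 0 < t ∧ t < T ∧ (c t).2 = 0}.ncard
        ≤ {t : ℕ | t < T ∧ (c t).2 = 0}.ncard := Set.ncard_le_ncard hsub hfin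
      _ = ((fun t => (c t).1) '' {t : ℕ | t < T ∧ (c t).2 = 0}).ncard :=
          (Set.ncard_image_of_injOn hinj).symm
      _ ≤ (Set.univ : Set Q).ncard :=
          Set.ncard_le_ncard (Set.subset_univ _) Set.finite_univ
      _ = Fintype.card Q := by rw [Set.ncard_univ, Nat.card_eq_fintype_card]
      _ ≤ 2 * Fintype.card Q := by omega
  · -- time bound
    have hub : ∀ t, t < T → (c t).2 ≤ (N:ℤ) := by
      intro t
      induction t with
      | zero => intro _; rw [hp0]; exact_mod_cast Int.ofNat_nonneg N
      | succ t ih =>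
        intro h
        have h1 := ih (Nat.lt_of_succ_lt h)
        have h2 := habs t
        have h3 := hpre (t+1) h
        omega
    have hstep_ub : ∀ t k, (c t).2 ≤ (c (t + k)).2 + k := by
      intro t k
      induction k with
      | zero => simp
      | succ k ih =>
        have h := habs (t + k)
        have e : t + (k+1) = (t + k) + 1 := rfl
        rw [e]
        push_cast
        omega
    have hge_negt : ∀ t : ℕ, -(t:ℤ) ≤ (c t).2 := by
      intro t
      induction t with
      | zero => rw [hp0]; omega
      | succ t ih =>
        have h := habs t
        push_cast
        omega
    have hlow : ∀ t, t ≤ T → -(K:ℤ) ≤ (c t).2 := by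
      by_contra hcon
      push_neg at hcon
      obtain ⟨t0, ht0T, ht0⟩ := hcon
      have hex : ∃ t, t ≤ T ∧ (c t).2 < -(K:ℤ) := ⟨t0, ht0T, ht0⟩
      have hwspec := Nat.find_spec hex
      set w := Nat.find hex with hwdef
      obtain ⟨hwT, hpw⟩ := hwspec
      have hmin : ∀ t, t < w → -(K:ℤ) ≤ (c t).2 := by
        intro t htw
        by_contra h
        exact Nat.find_min hex htw ⟨le_trans htw.le hwT, not_le.mp h⟩
      have hwK : (K:ℤ) + 1 ≤ (w:ℤ) := by
        have := hge_negt w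
        omega
      have hwK' : K + 1 ≤ w := by exact_mod_cast hwK
      have hpw_eq : (c w).2 = -((K:ℤ)+1) := by
        have h1 : 0 < w := by omega
        have h2 := hmin (w-1) (by omega)
        have h3 := habs (w-1)
        have h4 : w - 1 + 1 = w := by omega
        rw [h4] at h3
        omega
      have hwin : ∀ t, w ≤ t + (K+1) → t ≤ w → (c t).2 ≤ 0 := by
        intro t h1 h2
        have h3 := hstep_ub t (w - t)
        have h4 : t + (w - t) = w := by omega
        rw [h4] at h3
        rw [hpw_eq] at h3
        have h5 : ((w - t : ℕ) : ℤ) ≤ (K:ℤ) + 1 := by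
          have : w - t ≤ K + 1 := by omega
          exact_mod_cast this
        omega
      -- pigeonhole on the window
      obtain ⟨j1, hj1, j2, hj2, hjne, hjq⟩ :=
        Finset.exists_ne_map_eq_of_card_lt_of_maps_to
          (s := Finset.range (K+2)) (t := (Finset.univ : Finset Q))
          (by simp [hK]) (fun j _ => Finset.mem_univ ((c (w - j)).1))
      simp only [Finset.mem_range] at hj1 hj2
      obtain ⟨t1, t2, ht12, ht2w, ht1w, hq12⟩ :
          ∃ t1 t2 : ℕ, t1 < t2 ∧ t2 ≤ w ∧ w ≤ t1 + (K+1) ∧ (c t1).1 = (c t2).1 := by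
        rcases Nat.lt_or_ge j1 j2 with h | h
        · exact ⟨w - j2, w - j1, by omega, by omega, by omega, hjq.symm⟩
        · refine ⟨w - j1, w - j2, by omega, by omega, by omega, hjq⟩
      set per := t2 - t1 with hperdef
      have hper0 : 0 < per := by omega
      have ht2eq : t1 + per = t2 := by omega
      set d := (c t2).2 - (c t1).2 with hddef
      have hwin' : ∀ t, t1 ≤ t → t ≤ w → (c t).2 ≤ 0 := fun t h1 h2 =>
        hwin t (by omega) h2
      have hsubstep : ∀ u v : ℕ, (c u).2 ≤ 0 → (c v).2 ≤ 0 → (c u).1 = (c v).1 →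
          (c (u+1)).1 = (c (v+1)).1 ∧ (c (u+1)).2 - (c u).2 = (c (v+1)).2 - (c v).2 := by
        intro u v hu hv hq
        rw [hsucc u, hsucc v]
        simp [tstep, hsym_l _ hu, hsym_l _ hv, hq]
      have hwT' : w ≤ T := hwT
      rcases le_or_gt d 0 with hd | hd
      · -- d ≤ 0 : run stays ≤ 0 forever, contradiction with reaching N+1
        have main : ∀ m : ℕ, (c (t1 + m)).2 ≤ 0 ∧ (c (t1 + per + m)).1 = (c (t1 + m)).1 ∧
            (c (t1 + per + m)).2 = (c (t1 + m)).2 + d := by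
          intro m
          induction m using Nat.strong_induction_on with
          | _ m ih =>
            have hfirst : (c (t1 + m)).2 ≤ 0 := by
              rcases le_or_gt m per with h | h
              · exact hwin' (t1 + m) (by omega) (by omega)
              · obtain ⟨h1, h2, h3⟩ := ih (m - per) (by omega)
                have e : t1 + per + (m - per) = t1 + m := by omega
                rw [e] at h3
                omega
            refine ⟨hfirst, ?_⟩
            cases m with
            | zero =>
              constructor
              · show (c (t1 + per + 0)).1 = (c (t1 + 0)).1
                rw [Nat.add_zero, Nat.add_zero, ht2eq]
                exact hq12.symm
              · show (c (t1 + per + 0)).2 = (c (t1 + 0)).2 + d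
                rw [Nat.add_zero, Nat.add_zero, ht2eq, hddef]
                ring
            | succ m' =>
              obtain ⟨h1, h2, h3⟩ := ih m' (Nat.lt_succ_self m')
              have hle : (c (t1 + per + m')).2 ≤ 0 := by omega
              obtain ⟨e1, e2⟩ := hsubstep (t1 + per + m') (t1 + m') hle h1 h2
              have ea : t1 + per + (m' + 1) = (t1 + per + m') + 1 := rfl
              have eb : t1 + (m' + 1) = (t1 + m') + 1 := rfl
              rw [ea, eb]
              exact ⟨e1, by omega⟩
        have h1 := (main (T - t1)).1
        have e : t1 + (T - t1) = T := by omega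
        rw [e] at h1
        rw [hT2] at h1
        omega
      · -- d > 0 : position at w too high, contradiction
        have hA : ∀ m : ℕ, t1 + per + m ≤ w →
            (c (t1 + per + m)).1 = (c (t1 + m)).1 ∧
            (c (t1 + per + m)).2 = (c (t1 + m)).2 + d := by
          intro m
          induction m with
          | zero =>
            intro _
            refine ⟨?_, ?_⟩
            · rw [Nat.add_zero, Nat.add_zero, ht2eq]; exact hq12.symm
            · rw [Nat.add_zero, Nat.add_zero, ht2eq, hddef]; ring
          | succ m' ih =>
            intro hle
            obtain ⟨e1, e2⟩ := ih (by omega)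
            have hu : (c (t1 + per + m')).2 ≤ 0 := hwin' _ (by omega) (by omega)
            have hv : (c (t1 + m')).2 ≤ 0 := hwin' _ (by omega) (by omega)
            obtain ⟨f1, f2⟩ := hsubstep (t1 + per + m') (t1 + m') hu hv e1
            have ea : t1 + per + (m' + 1) = (t1 + per + m') + 1 := rfl
            have eb : t1 + (m' + 1) = (t1 + m') + 1 := rfl
            rw [ea, eb]
            exact ⟨f1, by omega⟩
        set r := (w - t1) % per with hrdef
        set n := (w - t1) / per with hndef
        have hnw2 : t1 + n * per + r = w := by
          have h := Nat.div_add_mod (w - t1) per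
          rw [← hndef, ← hrdef, Nat.mul_comm] at h
          omega
        have hiter : ∀ k : ℕ, k ≤ n → (c (t1 + k * per + r)).2 = (c (t1 + r)).2 + k * d := by
          intro k
          induction k with
          | zero => intro _; simp
          | succ k ih =>
            intro hk
            have h1 := ih (by omega)
            have h2 := hA (k * per + r) (by
              have e0 : t1 + per + (k * per + r) = t1 + (k+1) * per + r := by ring
              rw [e0]
              have hkn : (k+1) * per ≤ n * per := Nat.mul_le_mul_right per hk
              calc t1 + (k+1) * per + r ≤ t1 + n * per + r :=
                    Nat.add_le_add_right (Nat.add_le_add_left hkn t1) r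
                _ = w := hnw2)
            have e : t1 + per + (k * per + r) = t1 + (k+1) * per + r := by ring
            rw [e] at h2
            rw [← Nat.add_assoc] at h2
            rw [h2.2, h1]
            push_cast
            ring
        have hn1 : 1 ≤ n := by
          have hge : per ≤ w - t1 := by omega
          rw [hndef]
          exact (Nat.one_le_div_iff hper0).mpr hge
        have hrmin : -(K:ℤ) ≤ (c (t1 + r)).2 := by
          apply hmin
          have : r < per := Nat.mod_lt _ hper0
          omega
        have hfin := hiter n le_rfl
        rw [hnw2] at hfin
        rw [hpw_eq] at hfin
        have hnd : (1:ℤ) ≤ (n:ℤ) * d := by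
          have h1 : (1:ℤ) ≤ (n:ℤ) := by exact_mod_cast hn1
          nlinarith
        linarith [hfin, hrmin, hnd]
    -- counting distinct configurations
    have hcard := Finset.card_le_card_of_injOn (s := Finset.range T)
      (t := (Finset.univ : Finset Q) ×ˢ Finset.Icc (-(K:ℤ)) (N:ℤ)) c
      (by
        intro t ht
        simp only [Finset.coe_range, Set.mem_Iio, Finset.mem_coe] at ht ⊢
        rw [Finset.mem_product, Finset.mem_Icc]
        exact ⟨Finset.mem_univ _, hlow t ht.le, hub t ht⟩)
      (by
        intro t1 h1 t2 h2 heq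
        simp only [Finset.coe_range, Set.mem_Iio] at h1 h2
        by_contra hne
        rcases Nat.lt_or_ge t1 t2 with h | h
        · exact no_repeat' δ hT2 hpre h h2.le heq
        · exact no_repeat' δ hT2 hpre (lt_of_le_of_ne h (Ne.symm hne)) h1.le heq.symm)
    rw [Finset.card_range, Finset.card_product, Finset.card_univ, ← hK, Int.card_Icc] at hcard
    have hicc : ((N:ℤ) + 1 - -(K:ℤ)).toNat = N + K + 1 := by omega
    rw [hicc] at hcard
    calc T ≤ K * (N + K + 1) := hcard
      _ ≤ K * ((K + 2) * N) := by
          apply Nat.mul_le_mul_left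
          nlinarith
      _ = K * (K + 2) * N := by ring
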